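/- Let x_1, …, x_n be real, S_F = diag(e^{i x_1}, …, e^{i x_n}) ∈ ℂ^{n×n}, R ∈ ℂ^{n×n} the diagonal matrix with R_{kk} = (1 − e^{−i x_k})/|1 − e^{−i x_k}| if e^{−i x_k} ≠ 1 and R_{kk} = i otherwise, and M ∈ ℝ^{n×m} a real matrix. Set Θ = R M, B̂ = [Re(Θ) | −Im(Θ)] ∈ ℝ^{n×2m}, and let Q = (1/√2)[[I_m, i I_m],[I_m, −i I_m]] ∈ ℂ^{2m×2m}. Suppose B̂ V̂_B = Û_B Ŝ_B is a real singular value decomposition with V̂_Bᵀ V̂_B = I, Û_Bᵀ Û_B = I, and Ŝ_B diagonal with decreasing nonnegative entries. Write γ̃ = Q V̂_B e_{2m} = [α̃; β̃] with α̃, β̃ ∈ ℂ^m, where e_{2m} is the last standard basis vector. Then (1) γ̃ is a unit vector attaining the minimum of ‖[M | −S_F M] v‖_2 over all unit vectors v ∈ ℂ^{2m}, and (2) α̃_j = conj(β̃_j) for j = 1, …, m. -/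

import Mathlib

open Matrix

lemma sum_abs_sq_eq {ι : Type*} [Fintype ι] (v : ι → ℂ) :
    ∑ i,  ‖v i‖ ^ 2 = (star v ⬝ᵥ v).re := by
  simp [dotProduct, Complex.sq_norm, Complex.normSq_apply]

lemma iso_dot {ι κ : Type*} [Fintype ι] [Fintype κ] [DecidableEq κ]
    (A : Matrix ι κ ℂ) (hA : Aᴴ * A = 1)
    (v : κ → ℂ) : star (A *ᵥ v) ⬝ᵥ (A *ᵥ v) = star v ⬝ᵥ v := by
  rw [star_mulVec, dotProduct_mulVec, vecMul_vecMul, hA, vecMul_one]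

lemma iso_sum {ι κ : Type*} [Fintype ι] [Fintype κ] [DecidableEq κ]
    (A : Matrix ι κ ℂ) (hA : Aᴴ * A = 1)
    (v : κ → ℂ) : ∑ i,  ‖(A *ᵥ v) i‖ ^ 2 = ∑ i,  ‖v i‖ ^ 2 := by
  rw [sum_abs_sq_eq, sum_abs_sq_eq, iso_dot A hA]

lemma map_mul' {p q r : Type*} [Fintype q] (A : Matrix p q ℝ) (B : Matrix q r ℝ) :
    (A * B).map (fun a => (a : ℂ)) = A.map (fun a => (a : ℂ)) * B.map (fun a => (a : ℂ)) := by
  rw [show (fun a : ℝ => (a : ℂ)) = ⇑Complex.ofRealHom from rfl, Matrix.map_mul]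

lemma map_orth {p q : Type*} [Fintype p] [Fintype q] [DecidableEq p]
    (A : Matrix q p ℝ) (h : Aᵀ * A = 1) :
    (A.map (fun a => (a : ℂ)))ᴴ * (A.map (fun a => (a : ℂ))) = 1 := by
  have hT : (A.map (fun a => (a : ℂ)))ᴴ = (Aᵀ).map (fun a => (a : ℂ)) := by
    ext i j; simp [conjTranspose_apply, Complex.conj_ofReal]
  rw [hT, ← map_mul', h]
  simp

lemma colOf_mulVec {ι κ lι : Type*} [Fintype κ] (A : Matrix ι κ ℂ) (B : Matrix κ lι ℂ) (c : lι) :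
    A *ᵥ (fun l => B l c) = fun i => (A * B) i c := by
  funext i; simp [mulVec, dotProduct, mul_apply]

lemma r_facts (t : ℝ) :
    ((starRingEnd ℂ) (if Complex.exp (-(Complex.I * (t : ℝ))) ≠ 1 then
        (1 - Complex.exp (-(Complex.I * (t : ℝ))))
          / ( ‖1 - Complex.exp (-(Complex.I * (t : ℝ)))‖ : ℂ)
      else Complex.I) *
      (if Complex.exp (-(Complex.I * (t : ℝ))) ≠ 1 then
        (1 - Complex.exp (-(Complex.I * (t : ℝ))))
          / ( ‖1 - Complex.exp (-(Complex.I * (t : ℝ)))‖ : ℂ)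
      else Complex.I) = 1) ∧
    ((starRingEnd ℂ) (if Complex.exp (-(Complex.I * (t : ℝ))) ≠ 1 then
        (1 - Complex.exp (-(Complex.I * (t : ℝ))))
          / ( ‖1 - Complex.exp (-(Complex.I * (t : ℝ)))‖ : ℂ)
      else Complex.I) =
      -(if Complex.exp (-(Complex.I * (t : ℝ))) ≠ 1 then
        (1 - Complex.exp (-(Complex.I * (t : ℝ))))
          / ( ‖1 - Complex.exp (-(Complex.I * (t : ℝ)))‖ : ℂ)
      else Complex.I) * Complex.exp (Complex.I * t)) := by
  set e := Complex.exp (-(Complex.I * (t : ℝ))) with he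
  have hconj : (starRingEnd ℂ) e = Complex.exp (Complex.I * t) := by
    rw [he, ← Complex.exp_conj]
    simp [Complex.conj_I, Complex.conj_ofReal]
  have hprod : e * Complex.exp (Complex.I * t) = 1 := by
    rw [he, ← Complex.exp_add]; simp
  by_cases h : e = 1
  · have hx : Complex.exp (Complex.I * t) = 1 := by rw [← hprod, h, one_mul]
    simp [h, Complex.conj_I, hx]
  · have hz : (1 : ℂ) - e ≠ 0 := sub_ne_zero.mpr (fun hh => h hh.symm)
    have habs : ( ‖1 - e‖ : ℝ) ≠ 0 := by
      simpa [sub_eq_zero] using hz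
    simp only [ne_eq, h, not_false_iff, if_true]
    constructor
    · rw [map_div₀, Complex.conj_ofReal, div_mul_div_comm,
        ← Complex.normSq_eq_conj_mul_self, ← Complex.ofReal_mul,
        Complex.normSq_eq_norm_sq, ← pow_two, div_self]
      exact_mod_cast pow_ne_zero 2 habs
    · rw [map_div₀, Complex.conj_ofReal, map_sub, RingHom.map_one, hconj]
      rw [show -((1 - e) / ( ‖1-e‖ : ℂ)) * Complex.exp (Complex.I*t)
        = (-(1-e) * Complex.exp (Complex.I*t)) / ( ‖1-e‖ : ℂ) by ring]
      congr 1
      linear_combination -hprod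

/-- With Θ = R M and a real SVD of B̂ = [Re(Θ) | -Im(Θ)] whose
singular values decrease (so the last diagonal entry is the smallest), the vector
γ̃ = Q V̂_B e_{2m} = [α̃; β̃] is a unit minimizer of ‖[M | -S_F M] v‖₂ over unit
vectors, and satisfies α̃_j = conj(β̃_j). -/
theorem stmt_9 (m n : ℕ) (hm : 0 < m)
    (x : Fin n → ℝ)
    (SF : Matrix (Fin n) (Fin n) ℂ)
    (hSF : SF = Matrix.diagonal fun k => Complex.exp (Complex.I * (x k : ℝ)))
    (R : Matrix (Fin n) (Fin n) ℂ)
    (hR : R = Matrix.diagonal fun k =>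
      if Complex.exp (-(Complex.I * (x k : ℝ))) ≠ 1 then
        (1 - Complex.exp (-(Complex.I * (x k : ℝ))))
          / ( ‖1 - Complex.exp (-(Complex.I * (x k : ℝ)))‖ : ℂ)
      else Complex.I)
    (M : Matrix (Fin n) (Fin m) ℝ)
    (Θ : Matrix (Fin n) (Fin m) ℂ)
    (hΘ : Θ = R * M.map (fun a => (a : ℂ)))
    (Bhat : Matrix (Fin n) (Fin m ⊕ Fin m) ℝ)
    (hBhatl : ∀ k j, Bhat k (Sum.inl j) = (Θ k j).re)
    (hBhatr : ∀ k j, Bhat k (Sum.inr j) = -(Θ k j).im)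
    (Q : Matrix (Fin m ⊕ Fin m) (Fin m ⊕ Fin m) ℂ)
    (hQ : Q = ((Real.sqrt 2 : ℂ))⁻¹ •
      Matrix.fromBlocks (1 : Matrix (Fin m) (Fin m) ℂ) (Complex.I • 1) 1 (-(Complex.I • 1)))
    -- the concatenated matrix [M | -S_F M]:
    (BM : Matrix (Fin n) (Fin m ⊕ Fin m) ℂ)
    (hBMl : ∀ k j, BM k (Sum.inl j) = ((M k j : ℝ) : ℂ))
    (hBMr : ∀ k j, BM k (Sum.inr j) = -Complex.exp (Complex.I * (x k : ℝ)) * ((M k j : ℝ) : ℂ))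
    -- real singular value decomposition of B̂ with decreasing nonnegative singular values,
    -- so that the diagonal entry at the last index is the smallest one:
    (VhatB : Matrix (Fin m ⊕ Fin m) (Fin m ⊕ Fin m) ℝ)
    (UhatB : Matrix (Fin n) (Fin m ⊕ Fin m) ℝ)
    (σ : Fin m ⊕ Fin m → ℝ)
    (hsvd : Bhat * VhatB = UhatB * Matrix.diagonal σ)
    (hV : VhatBᵀ * VhatB = 1) (hU : UhatBᵀ * UhatB = 1)
    (hσ : ∀ i, 0 ≤ σ i)
    (hσmin : ∀ i, σ (Sum.inr (⟨m - 1, by omega⟩ : Fin m)) ≤ σ i)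
    -- γ̃ = Q V̂_B e_{2m}, the column of Q V̂_B at the last index:
    (γtilde : Fin m ⊕ Fin m → ℂ)
    (hγ : γtilde = fun i => (Q * VhatB.map (fun a => (a : ℂ))) i
      (Sum.inr (⟨m - 1, by omega⟩ : Fin m)))
    (αtilde βtilde : Fin m → ℂ)
    (hα : ∀ j, αtilde j = γtilde (Sum.inl j))
    (hβ : ∀ j, βtilde j = γtilde (Sum.inr j)) :
    ((∑ i,  ‖γtilde i‖ ^ 2 = 1) ∧
      ∀ v : Fin m ⊕ Fin m → ℂ, (∑ i,  ‖v i‖ ^ 2 = 1) →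
        ∑ k,  ‖BM.mulVec γtilde k‖ ^ 2 ≤ ∑ k,  ‖BM.mulVec v k‖ ^ 2) ∧
    (∀ j, αtilde j = starRingEnd ℂ (βtilde j)) := by
  classical
  set c0 : Fin m ⊕ Fin m := Sum.inr (⟨m - 1, by omega⟩ : Fin m) with hc0
  set Vc : Matrix (Fin m ⊕ Fin m) (Fin m ⊕ Fin m) ℂ := VhatB.map (fun a => (a : ℂ)) with hVcdef
  set Uc : Matrix (Fin n) (Fin m ⊕ Fin m) ℂ := UhatB.map (fun a => (a : ℂ)) with hUcdef
  set Bc : Matrix (Fin n) (Fin m ⊕ Fin m) ℂ := Bhat.map (fun a => (a : ℂ)) with hBcdef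
  set rfun : Fin n → ℂ := fun k =>
      if Complex.exp (-(Complex.I * (x k : ℝ))) ≠ 1 then
        (1 - Complex.exp (-(Complex.I * (x k : ℝ))))
          / ( ‖1 - Complex.exp (-(Complex.I * (x k : ℝ)))‖ : ℂ)
      else Complex.I with hrfun
  have hRd : R = Matrix.diagonal rfun := hR
  have hs2 : ((Real.sqrt 2 : ℝ) : ℂ) * ((Real.sqrt 2 : ℝ) : ℂ) = 2 := by
    rw [← Complex.ofReal_mul]; norm_num [Real.mul_self_sqrt]
  -- unitarity of Q
  have hQ1 : Qᴴ * Q = 1 := by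
    have hc : (starRingEnd ℂ) ((↑(Real.sqrt 2):ℂ))⁻¹ * ((↑(Real.sqrt 2):ℂ))⁻¹ = (2:ℂ)⁻¹ := by
      rw [map_inv₀, Complex.conj_ofReal, ← mul_inv, hs2]
    rw [hQ, conjTranspose_smul, smul_mul_smul_comm]
    rw [fromBlocks_conjTranspose, fromBlocks_multiply]
    simp only [conjTranspose_one, conjTranspose_neg, conjTranspose_smul, Complex.star_def,
      Complex.conj_I, neg_smul, one_mul, mul_one, Matrix.mul_smul, Matrix.smul_mul, smul_smul,
      Complex.I_mul_I, neg_neg, neg_mul, mul_neg, Matrix.one_mul, Matrix.mul_one, hc]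
    simp only [add_neg_cancel, neg_add_cancel, one_smul,
      ← two_smul ℂ (1 : Matrix (Fin m) (Fin m) ℂ)]
    rw [show (0 : Matrix (Fin m) (Fin m) ℂ) = (2:ℂ) • 0 by simp,
      ← Matrix.fromBlocks_smul, smul_smul, inv_mul_cancel₀ two_ne_zero, one_smul]
    simp [Matrix.fromBlocks_one]
  have hQ2 : Q * Qᴴ = 1 := mul_eq_one_comm.mp hQ1
  have hQad : (Qᴴ)ᴴ * Qᴴ = 1 := by rw [conjTranspose_conjTranspose]; exact hQ2
  -- orthogonality of mapped matrices
  have hVc1 : Vcᴴ * Vc = 1 := map_orth _ hV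
  have hVc2 : Vc * Vcᴴ = 1 := mul_eq_one_comm.mp hVc1
  have hVcad : (Vcᴴ)ᴴ * Vcᴴ = 1 := by rw [conjTranspose_conjTranspose]; exact hVc2
  have hUc1 : Ucᴴ * Uc = 1 := map_orth _ hU
  -- R is unitary
  have hR1 : Rᴴ * R = 1 := by
    rw [hRd, diagonal_conjTranspose, diagonal_mul_diagonal, ← diagonal_one]
    exact congrArg Matrix.diagonal (funext fun k => (r_facts (x k)).1)
  -- complex SVD
  have hsvdc : Bc * Vc = Uc * Matrix.diagonal (fun i => (σ i : ℂ)) := by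
    have h1 := congrArg (fun (A : Matrix (Fin n) (Fin m ⊕ Fin m) ℝ) =>
      A.map (fun a => (a : ℂ))) hsvd
    rw [map_mul', map_mul'] at h1
    rw [hBcdef, hVcdef, hUcdef, h1]
    congr 1
    exact Matrix.diagonal_map (by simp)
  -- entries of Θ
  have hΘe : ∀ k j, Θ k j = rfun k * ((M k j : ℝ) : ℂ) := by
    intro k j
    rw [hΘ, hRd]
    simp [Matrix.diagonal_mul]
  -- the key identity  Bc * Qᴴ = (√2)⁻¹ • (R * BM)
  have hkey : Bc * Qᴴ = ((Real.sqrt 2 : ℝ) : ℂ)⁻¹ • (R * BM) := by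
    ext k j
    have hrc : (starRingEnd ℂ) (rfun k) = -(rfun k) * Complex.exp (Complex.I * (x k : ℝ)) :=
      (r_facts (x k)).2
    rcases j with j | j
    · have hL : (Bc * Qᴴ) k (Sum.inl j) = ((Real.sqrt 2 : ℝ) : ℂ)⁻¹ * Θ k j := by
        simp only [mul_apply, Fintype.sum_sum_type, conjTranspose_apply, hQ,
          Matrix.smul_apply, fromBlocks_apply₁₁, fromBlocks_apply₁₂, Matrix.one_apply,
          smul_eq_mul, star_mul', star_one, star_zero, apply_ite (starRingEnd ℂ),
          _root_.map_one, _root_.map_zero,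
          Complex.star_def, Complex.conj_I, map_inv₀, Complex.conj_ofReal,
          mul_ite, mul_zero, ite_mul, zero_mul, mul_one, Finset.sum_ite_eq,
          Finset.mem_univ, if_true, hBcdef, Matrix.map_apply, hBhatl, hBhatr]
        push_cast
        linear_combination ((Real.sqrt 2 : ℝ) : ℂ)⁻¹ * (Complex.re_add_im (Θ k j))
      have hRt : (((Real.sqrt 2 : ℝ) : ℂ)⁻¹ • (R * BM)) k (Sum.inl j)
          = ((Real.sqrt 2 : ℝ) : ℂ)⁻¹ * (rfun k * ((M k j : ℝ) : ℂ)) := by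
        simp [hRd, Matrix.smul_apply, Matrix.diagonal_mul, hBMl]
      rw [hL, hRt, hΘe]
    · have hcz : (starRingEnd ℂ) (Θ k j)
          = ((((Θ k j).re : ℝ)) : ℂ) - ((((Θ k j).im : ℝ)) : ℂ) * Complex.I := by
        apply Complex.ext <;> simp
      have hL : (Bc * Qᴴ) k (Sum.inr j)
          = ((Real.sqrt 2 : ℝ) : ℂ)⁻¹ * (starRingEnd ℂ) (Θ k j) := by
        simp only [mul_apply, Fintype.sum_sum_type, conjTranspose_apply, hQ,
          Matrix.smul_apply, fromBlocks_apply₂₁, fromBlocks_apply₂₂, Matrix.one_apply, Matrix.neg_apply,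
          smul_eq_mul, star_mul', star_one, star_zero, star_neg, apply_ite (starRingEnd ℂ),
          _root_.map_one, _root_.map_zero, map_neg,
          Complex.star_def, Complex.conj_I, map_inv₀, Complex.conj_ofReal,
          mul_ite, mul_zero, ite_mul, zero_mul, mul_one, neg_mul, mul_neg, neg_neg,
          apply_ite (Neg.neg : ℂ → ℂ), neg_zero,
          Finset.sum_ite_eq, Finset.mem_univ, if_true, hBcdef, Matrix.map_apply,
          hBhatl, hBhatr]
        push_cast
        linear_combination ((Real.sqrt 2 : ℝ) : ℂ)⁻¹ * hcz.symm
      have hRt : (((Real.sqrt 2 : ℝ) : ℂ)⁻¹ • (R * BM)) k (Sum.inr j)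
          = ((Real.sqrt 2 : ℝ) : ℂ)⁻¹ *
            (rfun k * (-Complex.exp (Complex.I * (x k : ℝ)) * ((M k j : ℝ) : ℂ))) := by
        simp [hRd, Matrix.smul_apply, Matrix.diagonal_mul, hBMr]
      rw [hL, hRt, hΘe, _root_.map_mul, Complex.conj_ofReal, hrc]
      ring
  -- consequence:  R * BM = √2 • (Bc * Qᴴ)
  have hRBM : R * BM = ((Real.sqrt 2 : ℝ) : ℂ) • (Bc * Qᴴ) := by
    rw [hkey, smul_smul, mul_inv_cancel₀, one_smul]
    simpa using Real.sqrt_ne_zero'.mpr (by norm_num : (0:ℝ) < 2)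
  -- master formula
  have master : ∀ v : Fin m ⊕ Fin m → ℂ,
      ∑ k,  ‖BM.mulVec v k‖ ^ 2
        = 2 * ∑ i, (σ i) ^ 2 *  ‖(Vcᴴ *ᵥ (Qᴴ *ᵥ v)) i‖ ^ 2 := by
    intro v
    have hw : Vc *ᵥ (Vcᴴ *ᵥ (Qᴴ *ᵥ v)) = Qᴴ *ᵥ v := by
      rw [mulVec_mulVec, hVc2, one_mulVec]
    have h1 : R *ᵥ (BM *ᵥ v) = ((Real.sqrt 2 : ℝ) : ℂ) • (Bc *ᵥ (Qᴴ *ᵥ v)) := by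
      rw [mulVec_mulVec, hRBM, smul_mulVec, mulVec_mulVec]
    calc ∑ k,  ‖BM.mulVec v k‖ ^ 2
        = ∑ k,  ‖(R *ᵥ (BM *ᵥ v)) k‖ ^ 2 := (iso_sum R hR1 _).symm
      _ = ∑ k,  ‖(((Real.sqrt 2 : ℝ) : ℂ) • (Bc *ᵥ (Qᴴ *ᵥ v))) k‖ ^ 2 := by
          rw [h1]
      _ = 2 * ∑ k,  ‖(Bc *ᵥ (Qᴴ *ᵥ v)) k‖ ^ 2 := by
          rw [Finset.mul_sum]
          refine Finset.sum_congr rfl fun k _ => ?_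
          simp only [Pi.smul_apply, smul_eq_mul, norm_mul, mul_pow,
            Complex.norm_real, Real.norm_eq_abs, abs_of_nonneg (Real.sqrt_nonneg 2)]
          rw [Real.sq_sqrt (by norm_num : (0:ℝ) ≤ 2)]
      _ = 2 * ∑ i,  ‖(Matrix.diagonal (fun i => (σ i : ℂ))
            *ᵥ (Vcᴴ *ᵥ (Qᴴ *ᵥ v))) i‖ ^ 2 := by
          have h2 : Bc *ᵥ (Qᴴ *ᵥ v)
              = Uc *ᵥ (Matrix.diagonal (fun i => (σ i : ℂ)) *ᵥ (Vcᴴ *ᵥ (Qᴴ *ᵥ v))) := by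
            conv_lhs => rw [← hw]
            rw [mulVec_mulVec, hsvdc, ← mulVec_mulVec]
          rw [h2, iso_sum Uc hUc1]
      _ = 2 * ∑ i, (σ i) ^ 2 *  ‖(Vcᴴ *ᵥ (Qᴴ *ᵥ v)) i‖ ^ 2 := by
          congr 1
          refine Finset.sum_congr rfl fun i _ => ?_
          rw [mulVec_diagonal, norm_mul, mul_pow, Complex.norm_real,
            Real.norm_eq_abs, _root_.sq_abs]
  -- the coefficient vector of γtilde is the standard basis vector at c0
  have huγ : Vcᴴ *ᵥ (Qᴴ *ᵥ γtilde)
      = fun i => (1 : Matrix (Fin m ⊕ Fin m) (Fin m ⊕ Fin m) ℂ) i c0 := by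
    rw [hγ, colOf_mulVec, colOf_mulVec, ← Matrix.mul_assoc, ← Matrix.mul_assoc,
      show Vcᴴ * Qᴴ * Q = Vcᴴ by rw [Matrix.mul_assoc, hQ1, Matrix.mul_one], hVc1]
  have hδ : ∑ i, (σ i) ^ 2 * 
      ‖(Vcᴴ *ᵥ (Qᴴ *ᵥ γtilde)) i‖ ^ 2 = (σ c0) ^ 2 := by
    rw [huγ]
    simp [Matrix.one_apply, apply_ite (fun z : ℂ => ‖z‖), Finset.sum_ite_eq']
  refine ⟨⟨?_, ?_⟩, ?_⟩
  · -- γtilde is a unit vector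
    have e1 := iso_sum Qᴴ hQad γtilde
    have e2 := iso_sum Vcᴴ hVcad (Qᴴ *ᵥ γtilde)
    rw [huγ] at e2
    rw [← e1, ← e2]
    simp [Matrix.one_apply, apply_ite (fun z : ℂ => ‖z‖), Finset.sum_ite_eq']
  · -- minimality
    intro v hv
    rw [master, master v, hδ]
    have hu1 : ∑ i,  ‖(Vcᴴ *ᵥ (Qᴴ *ᵥ v)) i‖ ^ 2 = 1 := by
      rw [iso_sum Vcᴴ hVcad, iso_sum Qᴴ hQad, hv]
    have hexp : (σ c0) ^ 2 = ∑ i, (σ c0) ^ 2 *  ‖(Vcᴴ *ᵥ (Qᴴ *ᵥ v)) i‖ ^ 2 := by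
      rw [← Finset.mul_sum, hu1, mul_one]
    refine mul_le_mul_of_nonneg_left ?_ (by norm_num)
    rw [hexp]
    exact Finset.sum_le_sum fun i _ => mul_le_mul_of_nonneg_right
      (pow_le_pow_left₀ (hσ c0) (hσmin i) 2) (by positivity)
  · -- conjugate symmetry
    intro j
    have hγl : γtilde (Sum.inl j) = ((Real.sqrt 2 : ℝ) : ℂ)⁻¹ *
        (((VhatB (Sum.inl j) c0 : ℝ) : ℂ) + Complex.I * ((VhatB (Sum.inr j) c0 : ℝ) : ℂ)) := by
      rw [hγ]
      simp only [mul_apply, Fintype.sum_sum_type, hQ, Matrix.smul_apply,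
        fromBlocks_apply₁₁, fromBlocks_apply₁₂, Matrix.one_apply, smul_eq_mul,
        ite_mul, zero_mul, mul_ite, mul_zero, mul_one, Finset.sum_ite_eq,
        Finset.mem_univ, if_true, hVcdef, Matrix.map_apply]
      ring
    have hγr : γtilde (Sum.inr j) = ((Real.sqrt 2 : ℝ) : ℂ)⁻¹ *
        (((VhatB (Sum.inl j) c0 : ℝ) : ℂ) - Complex.I * ((VhatB (Sum.inr j) c0 : ℝ) : ℂ)) := by
      rw [hγ]
      simp only [mul_apply, Fintype.sum_sum_type, hQ, Matrix.smul_apply,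
        fromBlocks_apply₂₁, fromBlocks_apply₂₂, Matrix.one_apply, Matrix.neg_apply,
        smul_eq_mul, ite_mul, zero_mul, mul_ite, mul_zero, mul_one, neg_mul, mul_neg,
        neg_neg, neg_zero, apply_ite (Neg.neg : ℂ → ℂ),
        Finset.sum_ite_eq, Finset.mem_univ, if_true, hVcdef,
        Matrix.map_apply]
      ring
    rw [hα, hβ, hγl, hγr, _root_.map_mul, map_sub, _root_.map_mul, map_inv₀,
      Complex.conj_ofReal, Complex.conj_ofReal, Complex.conj_ofReal, Complex.conj_I]
    ring
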